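/- arXiv:1706.01534 — 3 statements merged into one kernel-verified Lean document; each statement's English description precedes it below -/
import Mathlib

section
/- Let (Ω, F, P) be a probability space, let Y : Ω → E be a random variable with values in a standard Borel space E, and let X : Ω → ℝ be a real random variable. Suppose the regular conditional distribution of X given Y is almost surely the Gaussian measure on ℝ with mean m(Y) and variance v, where m : E → ℝ is measurable and v > 0 is a constant. Let σ > 0 and K > 0 be constants, let a : E → ℝ be measurable with a(Y) > 0 almost surely, and suppose a(Y)·exp(σX) is integrable. Define d⁻ = (ln(a(Y)/K) + σ·m(Y))/(σ√v) and d⁺ = d⁻ + σ√v. Then, almost surely, E[max(a(Y)·exp(σX) − K, 0) | σ(Y)] = a(Y)·exp(σ·m(Y) + σ²v/2)·Φ(d⁺) − K·Φ(d⁻), where Φ is the cumulative distribution function of the standard normal law. -/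
open MeasureTheory ProbabilityTheory NNReal

/-- The cumulative distribution function `Φ` of the standard normal law. -/
noncomputable def stdNormalCDF (x : ℝ) : ℝ := cdf (gaussianReal 0 1) x

namespace CallAux
open Set

lemma gaussianReal_eq_map (m : ℝ) (v : ℝ≥0) :
    gaussianReal m v = (gaussianReal 0 1).map (fun x => Real.sqrt v * x + m) := by
  have h1 : (gaussianReal (0:ℝ) 1).map (fun x => Real.sqrt v * x) = gaussianReal 0 v := by
    rw [show (fun x => Real.sqrt (v:ℝ) * x) = (Real.sqrt (v:ℝ) * ·) from rfl,
      gaussianReal_map_const_mul]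
    congr 1
    · simp
    · ext
      push_cast
      rw [Real.sq_sqrt v.coe_nonneg]
      simp
  have h2 := gaussianReal_map_add_const (μ := 0) (v := v) m
  rw [zero_add] at h2
  rw [← h2, ← h1, Measure.map_map (measurable_id'.add_const m)
    (measurable_const_mul _)]
  rfl

lemma stdNormal_Ici_toReal (y : ℝ) :
    ((gaussianReal 0 1) (Ici y)).toReal = stdNormalCDF (-y) := by
  have hmap : (gaussianReal (0:ℝ) 1).map ((-1 : ℝ) * ·) = gaussianReal 0 1 := by
    rw [gaussianReal_map_const_mul]
    congr 1
    · simp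
    · ext; norm_num
  have : (gaussianReal (0:ℝ) 1) (Ici y) = (gaussianReal 0 1) (Iic (-y)) := by
    conv_lhs => rw [← hmap]
    rw [Measure.map_apply (measurable_const_mul _) measurableSet_Ici]
    congr 1
    ext x
    simp only [mem_preimage, mem_Ici, mem_Iic]
    constructor <;> intro h <;> linarith
  rw [this, stdNormalCDF, cdf_eq_real]
  rfl

lemma gaussianReal_Ici_toReal (m c : ℝ) {v : ℝ≥0} (hv : v ≠ 0) :
    ((gaussianReal m v) (Ici c)).toReal = stdNormalCDF ((m - c) / Real.sqrt v) := by
  have hvpos : (0:ℝ) < Real.sqrt v := Real.sqrt_pos.mpr (by positivity)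
  rw [gaussianReal_eq_map m v,
    Measure.map_apply (by fun_prop) measurableSet_Ici]
  have : (fun x => Real.sqrt (v:ℝ) * x + m) ⁻¹' Ici c = Ici ((c - m) / Real.sqrt v) := by
    ext x
    simp only [mem_preimage, mem_Ici]
    rw [div_le_iff₀ hvpos]
    constructor <;> intro h <;> nlinarith
  rw [this, stdNormal_Ici_toReal]
  congr 1
  field_simp
  ring

end CallAux




namespace CallAux
open Set

lemma pdf_tilt (σ m : ℝ) {v : ℝ≥0} (hv : v ≠ 0) (x : ℝ) :
    gaussianPDFReal m v x * Real.exp (σ * x)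
      = Real.exp (σ * m + σ ^ 2 * v / 2) * gaussianPDFReal (m + σ * v) v x := by
  have hv' : (0:ℝ) < (v:ℝ) := by positivity
  have h : -(x - m) ^ 2 / (2 * (v:ℝ)) + σ * x
      = (σ * m + σ ^ 2 * (v:ℝ) / 2) + (-(x - (m + σ * (v:ℝ))) ^ 2 / (2 * (v:ℝ))) := by
    field_simp
    ring
  simp only [gaussianPDFReal]
  rw [mul_assoc ((Real.sqrt (2 * Real.pi * (v:ℝ)))⁻¹), ← Real.exp_add, h, Real.exp_add]
  ring

lemma setIntegral_gaussianReal {m : ℝ} {v : ℝ≥0} (hv : v ≠ 0) (g : ℝ → ℝ) {s : Set ℝ}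
    (hs : MeasurableSet s) :
    ∫ x in s, g x ∂(gaussianReal m v) = ∫ x in s, gaussianPDFReal m v x * g x := by
  rw [gaussianReal_of_var_ne_zero _ hv]
  have h : (gaussianPDF m v) = (fun x => (((Real.toNNReal (gaussianPDFReal m v x)) : ℝ≥0) : ENNReal)) := rfl
  rw [h, setIntegral_withDensity_eq_setIntegral_smul
    (measurable_gaussianPDFReal m v).real_toNNReal g hs]
  refine setIntegral_congr_fun hs fun x _ => ?_
  simp [NNReal.smul_def, Real.coe_toNNReal _ (gaussianPDFReal_nonneg m v x)]

lemma integrable_exp_gaussianReal (σ m : ℝ) {v : ℝ≥0} (hv : v ≠ 0) :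
    Integrable (fun x => Real.exp (σ * x)) (gaussianReal m v) := by
  rw [gaussianReal_of_var_ne_zero _ hv]
  have h : (gaussianPDF m v) = (fun x => (((Real.toNNReal (gaussianPDFReal m v x)) : ℝ≥0) : ENNReal)) := rfl
  rw [h, integrable_withDensity_iff_integrable_smul
    (measurable_gaussianPDFReal m v).real_toNNReal]
  have : (fun x => (Real.toNNReal (gaussianPDFReal m v x)) • Real.exp (σ * x))
      = fun x => Real.exp (σ * m + σ ^ 2 * v / 2) * gaussianPDFReal (m + σ * v) v x := by
    ext x
    rw [NNReal.smul_def, Real.coe_toNNReal _ (gaussianPDFReal_nonneg m v x), smul_eq_mul,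
      pdf_tilt σ m hv x]
  rw [this]
  exact (integrable_gaussianPDFReal _ _).const_mul _

lemma setIntegral_exp_gaussianReal (σ m c : ℝ) {v : ℝ≥0} (hv : v ≠ 0) :
    ∫ x in Ici c, Real.exp (σ * x) ∂(gaussianReal m v)
      = Real.exp (σ * m + σ ^ 2 * v / 2) * ((gaussianReal (m + σ * v) v) (Ici c)).toReal := by
  rw [setIntegral_gaussianReal hv _ measurableSet_Ici]
  have : ∀ x ∈ Ici c, gaussianPDFReal m v x * Real.exp (σ * x)
      = Real.exp (σ * m + σ ^ 2 * v / 2) * gaussianPDFReal (m + σ * v) v x :=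
    fun x _ => pdf_tilt σ m hv x
  rw [setIntegral_congr_fun measurableSet_Ici this, MeasureTheory.integral_const_mul,
    gaussianReal_apply_eq_integral _ hv, ENNReal.toReal_ofReal]
  exact integral_nonneg fun x => gaussianPDFReal_nonneg _ _ _

end CallAux

namespace CallAux
open Set

lemma gaussian_call_integral (A K σ : ℝ) (hA : 0 < A) (hK : 0 < K) (hσ : 0 < σ)
    (m : ℝ) {v : ℝ≥0} (hv : 0 < v) :
    ∫ x, max (A * Real.exp (σ * x) - K) 0 ∂(gaussianReal m v)
      = A * Real.exp (σ * m + σ ^ 2 * (v : ℝ) / 2) *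
          stdNormalCDF ((Real.log (A / K) + σ * m) / (σ * Real.sqrt v) + σ * Real.sqrt v)
        - K * stdNormalCDF ((Real.log (A / K) + σ * m) / (σ * Real.sqrt v)) := by
  have hv' : v ≠ 0 := hv.ne'
  have hvR : (0:ℝ) < (v:ℝ) := by positivity
  have hs : (0:ℝ) < Real.sqrt v := Real.sqrt_pos.mpr hvR
  set c : ℝ := Real.log (K / A) / σ with hc
  have hiff : ∀ x : ℝ, 0 ≤ A * Real.exp (σ * x) - K ↔ c ≤ x := by
    intro x
    rw [sub_nonneg, hc, div_le_iff₀ hσ, mul_comm x σ, ← Real.log_exp (σ * x),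
      Real.log_le_log_iff (by positivity) (Real.exp_pos _), div_le_iff₀ hA, mul_comm]
    rw [Real.log_exp]
  have hind : (fun x => max (A * Real.exp (σ * x) - K) 0)
      = (Ici c).indicator (fun x => A * Real.exp (σ * x) - K) := by
    ext x
    by_cases h : c ≤ x
    · rw [Set.indicator_of_mem (show x ∈ Ici c from h), max_eq_left ((hiff x).mpr h)]
    · rw [Set.indicator_of_notMem (show x ∉ Ici c from h), max_eq_right]
      by_contra h'
      exact h ((hiff x).mp (by linarith [lt_of_not_ge h']))
  rw [hind, integral_indicator measurableSet_Ici]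
  have hIexp : Integrable (fun x => A * Real.exp (σ * x))
      ((gaussianReal m v).restrict (Ici c)) :=
    ((integrable_exp_gaussianReal σ m hv').const_mul A).restrict
  rw [integral_sub hIexp (integrable_const K), MeasureTheory.integral_const_mul,
    setIntegral_exp_gaussianReal σ m c hv', integral_const, smul_eq_mul,
    measureReal_def, Measure.restrict_apply_univ, gaussianReal_Ici_toReal _ _ hv',
    gaussianReal_Ici_toReal _ _ hv']
  have hlog : Real.log (K / A) = - Real.log (A / K) := by
    rw [← Real.log_inv, inv_div]
  have e1 : (m - c) / Real.sqrt v = (Real.log (A / K) + σ * m) / (σ * Real.sqrt v) := by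
    rw [hc, hlog]
    field_simp
    ring
  have e2 : (m + σ * (v:ℝ) - c) / Real.sqrt v
      = (Real.log (A / K) + σ * m) / (σ * Real.sqrt v) + σ * Real.sqrt v := by
    rw [hc, hlog]
    field_simp
    linear_combination (-(σ^2)) * Real.sq_sqrt v.coe_nonneg
  rw [e1, e2]
  ring

end CallAux

/-- **Conditional value of a European call (key computation of Corollary 3.4).**
If the regular conditional distribution of `X` given `Y` is a.s. Gaussian with mean `m (Y ω)`
and constant variance `v > 0`, `σ, K > 0`, `a(Y) > 0` a.s. and `a(Y)·exp(σX)` is integrable,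
then, with `d⁻ = (ln(a(Y)/K) + σ·m(Y))/(σ√v)` and `d⁺ = d⁻ + σ√v`, a.s.
`E[max(a(Y)·exp(σX) − K, 0) | σ(Y)] = a(Y)·exp(σ·m(Y) + σ²v/2)·Φ(d⁺) − K·Φ(d⁻)`. -/
theorem condexp_call_payoff_of_condDistrib_gaussian
    {Ω : Type*} {m0 : MeasurableSpace Ω} {P : Measure Ω} [IsProbabilityMeasure P]
    {E : Type*} {mE : MeasurableSpace E} [StandardBorelSpace E] [Nonempty E]
    (Y : Ω → E) (hY : Measurable Y)
    (X : Ω → ℝ) (hX : Measurable X)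
    (m : E → ℝ) (hm : Measurable m) (v : ℝ≥0) (hv : 0 < v)
    (hGauss : ∀ᵐ ω ∂P, condDistrib X Y P (Y ω) = gaussianReal (m (Y ω)) v)
    (σ K : ℝ) (hσ : 0 < σ) (hK : 0 < K)
    (a : E → ℝ) (ha : Measurable a) (haPos : ∀ᵐ ω ∂P, 0 < a (Y ω))
    (hInt : Integrable (fun ω => a (Y ω) * Real.exp (σ * X ω)) P) :
    (P[fun ω => max (a (Y ω) * Real.exp (σ * X ω) - K) 0|MeasurableSpace.comap Y mE]) =ᵐ[P]
      fun ω =>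
        a (Y ω) * Real.exp (σ * m (Y ω) + σ ^ 2 * (v : ℝ) / 2) *
            stdNormalCDF ((Real.log (a (Y ω) / K) + σ * m (Y ω)) / (σ * Real.sqrt v)
              + σ * Real.sqrt v)
          - K * stdNormalCDF ((Real.log (a (Y ω) / K) + σ * m (Y ω)) / (σ * Real.sqrt v)) := by
  set f : E × ℝ → ℝ := fun p => max (a p.1 * Real.exp (σ * p.2) - K) 0 with hf_def
  have hf : StronglyMeasurable f := by
    refine Measurable.stronglyMeasurable ?_
    fun_prop
  have hInt' : Integrable (fun ω => f (Y ω, X ω)) P := by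
    refine hInt.mono ?_ ?_
    · exact (hf.measurable.comp ((hY.prodMk hX))).aestronglyMeasurable
    · refine Filter.Eventually.of_forall fun ω => ?_
      simp only [hf_def, Real.norm_eq_abs]
      rw [abs_of_nonneg (le_max_right _ _)]
      refine max_le ?_ (abs_nonneg _)
      have := le_abs_self (a (Y ω) * Real.exp (σ * X ω))
      linarith
  have h := condExp_prod_ae_eq_integral_condDistrib (μ := P) hY hX.aemeasurable hf hInt'
  refine h.trans ?_
  filter_upwards [hGauss, haPos] with ω hg hpos
  rw [hg]
  exact CallAux.gaussian_call_integral (a (Y ω)) K σ hpos hK hσ (m (Y ω)) hv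
end

section
/- Let (Ω, F, P) be a probability space, let Y : Ω → E be a random variable with values in a standard Borel space E generating the sub-σ-algebra G = σ(Y), and let X : Ω → ℝ be a real random variable whose regular conditional distribution given Y is almost surely the Gaussian measure on ℝ with mean m(Y) and variance v, where m : E → ℝ is measurable and v > 0 is constant. Let σ > 0, K > 0, k ∈ [0, 1). Let S_i, V^k_i, π, π_prev be G-measurable integrable real random variables with S_i > 0 almost surely, let a : E → ℝ be measurable with a(Y) > 0 almost surely, set S_{i+1} = a(Y)·exp(σX), and assume S_{i+1}, π·S_{i+1} and (S_{i+1} − K)⁺ are integrable. Define V^k_{i+1} = V^k_i + π·(S_{i+1} − S_i) − k·S_i·|π − π_prev|, Ŝ = a(Y)·exp(σ·m(Y) + σ²v/2), d⁻ = (ln(a(Y)/K) + σ·m(Y))/(σ√v), and d⁺ = d⁻ + σ√v. Then E[V^k_{i+1} | G] = E[(S_{i+1} − K)⁺ | G] almost surely if and only if, almost surely, π·(Ŝ − S_i) = Ŝ·Φ(d⁺)/exp(0)·1 − K·Φ(d⁻) − V^k_i + k·S_i·|π − π_prev|, i.e. π·(Ŝ − S_i) = a(Y)·exp(σ·m(Y)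 + σ²v/2)·Φ(d⁺) − K·Φ(d⁻) − V^k_i + k·S_i·|π − π_prev|, where Φ is the standard normal cumulative distribution function. -/
open MeasureTheory ProbabilityTheory NNReal

section CMHAux
open ENNReal Real Set

namespace CMH
variable {μ : ℝ} {v : ℝ≥0}

lemma pdf_coe (μ : ℝ) (v : ℝ≥0) :
    gaussianPDF μ v = fun x => ((Real.toNNReal (gaussianPDFReal μ v x) : ℝ≥0) : ℝ≥0∞) := rfl

lemma integral_gaussian_eq (hv : v ≠ 0) (g : ℝ → ℝ) :
    ∫ x, g x ∂(gaussianReal μ v) = ∫ x, gaussianPDFReal μ v x * g x := by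
  rw [gaussianReal_of_var_ne_zero _ hv, pdf_coe,
    integral_withDensity_eq_integral_smul ((measurable_gaussianPDFReal μ v).real_toNNReal) g]
  congr 1; ext x
  rw [NNReal.smul_def, smul_eq_mul, Real.coe_toNNReal _ (gaussianPDFReal_nonneg μ v x)]

lemma setIntegral_gaussian_eq (hv : v ≠ 0) (g : ℝ → ℝ) {s : Set ℝ} (hs : MeasurableSet s) :
    ∫ x in s, g x ∂(gaussianReal μ v) = ∫ x in s, gaussianPDFReal μ v x * g x := by
  rw [gaussianReal_of_var_ne_zero _ hv, pdf_coe,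
    setIntegral_withDensity_eq_setIntegral_smul ((measurable_gaussianPDFReal μ v).real_toNNReal) g hs]
  congr 1; ext x
  rw [NNReal.smul_def, smul_eq_mul, Real.coe_toNNReal _ (gaussianPDFReal_nonneg μ v x)]

lemma integrable_gaussian_iff (hv : v ≠ 0) (g : ℝ → ℝ) :
    Integrable g (gaussianReal μ v) ↔ Integrable (fun x => gaussianPDFReal μ v x * g x) volume := by
  rw [gaussianReal_of_var_ne_zero _ hv, pdf_coe,
    integrable_withDensity_iff_integrable_smul ((measurable_gaussianPDFReal μ v).real_toNNReal)]
  constructor <;> intro h <;> refine h.congr (ae_of_all _ fun x => ?_) <;>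
    simp only [NNReal.smul_def, smul_eq_mul, Real.coe_toNNReal _ (gaussianPDFReal_nonneg μ v x)]

lemma tilt_pdf (hv : v ≠ 0) (σ : ℝ) (x : ℝ) :
    Real.exp (σ * x) * gaussianPDFReal μ v x
      = Real.exp (σ * μ + σ ^ 2 * v / 2) * gaussianPDFReal (μ + σ * v) v x := by
  have hv' : (v : ℝ) ≠ 0 := by exact_mod_cast hv
  simp only [gaussianPDFReal]
  have key : Real.exp (σ * x) * Real.exp (-(x - μ) ^ 2 / (2 * v))
      = Real.exp (σ * μ + σ ^ 2 * v / 2) * Real.exp (-(x - (μ + σ * v)) ^ 2 / (2 * v)) := by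
    rw [← Real.exp_add, ← Real.exp_add]
    congr 1
    field_simp
    ring
  calc Real.exp (σ * x) * ((√(2 * π * v))⁻¹ * Real.exp (-(x - μ) ^ 2 / (2 * v)))
      = (√(2 * π * v))⁻¹ * (Real.exp (σ * x) * Real.exp (-(x - μ) ^ 2 / (2 * v))) := by ring
    _ = (√(2 * π * v))⁻¹ * (Real.exp (σ * μ + σ ^ 2 * v / 2) * Real.exp (-(x - (μ + σ * v)) ^ 2 / (2 * v))) := by rw [key]
    _ = _ := by ring


lemma sqrt_v_pos (hv : v ≠ 0) : 0 < Real.sqrt v :=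
  Real.sqrt_pos.mpr (by exact_mod_cast pos_iff_ne_zero.mpr hv)

lemma gaussianReal_eq_map (hv : v ≠ 0) (μ : ℝ) :
    gaussianReal μ v = (gaussianReal 0 1).map (fun x => Real.sqrt v * x + μ) := by
  have h1 : (gaussianReal 0 1).map (fun x => Real.sqrt v * x) = gaussianReal 0 v := by
    rw [show (fun x => Real.sqrt v * x) = (Real.sqrt v * ·) from rfl,
      gaussianReal_map_const_mul]
    congr 1
    · ring
    · ext
      simp [Real.sq_sqrt v.coe_nonneg]
  have h2 : (fun x => Real.sqrt v * x + μ) = (· + μ) ∘ (fun x => Real.sqrt v * x) := rfl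
  rw [h2, ← Measure.map_map (measurable_add_const μ) (measurable_const_mul _), h1,
    gaussianReal_map_add_const, zero_add]

lemma g01_neg : (gaussianReal 0 1).map (fun x => -x) = gaussianReal 0 1 := by
  rw [show (fun x : ℝ => -x) = ((-1 : ℝ) * ·) by funext x; ring, gaussianReal_map_const_mul]
  congr 1
  · ring
  · ext; norm_num

lemma g01_Ici (d : ℝ) : ((gaussianReal 0 1) (Ici d)).toReal = stdNormalCDF (-d) := by
  have h1 : (gaussianReal 0 1) (Ici d) = (gaussianReal 0 1) (Iic (-d)) := by
    conv_lhs => rw [← g01_neg]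
    rw [Measure.map_apply measurable_neg measurableSet_Ici]
    congr 1
    ext x
    simp
  rw [h1, stdNormalCDF, cdf_eq_real, measureReal_def]

lemma gaussianReal_Ici_toReal (hv : v ≠ 0) (μ c : ℝ) :
    ((gaussianReal μ v) (Ici c)).toReal = stdNormalCDF ((μ - c) / Real.sqrt v) := by
  have hs := sqrt_v_pos hv
  rw [gaussianReal_eq_map hv μ,
    Measure.map_apply (by fun_prop) measurableSet_Ici]
  have hpre : (fun x => Real.sqrt v * x + μ) ⁻¹' (Ici c) = Ici ((c - μ) / Real.sqrt v) := by
    ext x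
    simp only [mem_preimage, mem_Ici]
    rw [div_le_iff₀ hs]
    constructor <;> intro h <;> nlinarith
  rw [hpre, g01_Ici]
  congr 1
  field_simp
  ring

lemma integrable_exp_gaussian (hv : v ≠ 0) (σ : ℝ) :
    Integrable (fun x => Real.exp (σ * x)) (gaussianReal μ v) := by
  rw [integrable_gaussian_iff hv]
  refine ((integrable_gaussianPDFReal (μ + σ * v) v).const_mul
    (Real.exp (σ * μ + σ ^ 2 * v / 2))).congr (ae_of_all _ fun x => ?_)
  dsimp only
  rw [← tilt_pdf hv σ x, mul_comm]

lemma integral_exp_gaussian (hv : v ≠ 0) (σ : ℝ) :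
    ∫ x, Real.exp (σ * x) ∂(gaussianReal μ v) = Real.exp (σ * μ + σ ^ 2 * v / 2) := by
  rw [integral_gaussian_eq hv]
  have : ∀ x : ℝ, gaussianPDFReal μ v x * Real.exp (σ * x)
      = Real.exp (σ * μ + σ ^ 2 * v / 2) * gaussianPDFReal (μ + σ * v) v x := fun x => by
    rw [mul_comm, tilt_pdf hv σ x]
  simp_rw [this]
  rw [integral_const_mul, integral_gaussianPDFReal_eq_one _ hv, mul_one]

lemma toReal_gaussianReal (hv : v ≠ 0) (s : Set ℝ) :
    ((gaussianReal μ v) s).toReal = ∫ x in s, gaussianPDFReal μ v x := by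
  rw [gaussianReal_apply_eq_integral _ hv s,
    ENNReal.toReal_ofReal (integral_nonneg (gaussianPDFReal_nonneg μ v))]

lemma setIntegral_exp_gaussian (hv : v ≠ 0) (σ c : ℝ) :
    ∫ x in Ici c, Real.exp (σ * x) ∂(gaussianReal μ v)
      = Real.exp (σ * μ + σ ^ 2 * v / 2) * ((gaussianReal (μ + σ * v) v) (Ici c)).toReal := by
  rw [setIntegral_gaussian_eq hv _ measurableSet_Ici]
  have : ∀ x : ℝ, gaussianPDFReal μ v x * Real.exp (σ * x)
      = Real.exp (σ * μ + σ ^ 2 * v / 2) * gaussianPDFReal (μ + σ * v) v x := fun x => by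
    rw [mul_comm, tilt_pdf hv σ x]
  simp_rw [this]
  rw [integral_const_mul, toReal_gaussianReal hv]

lemma call_indicator {σ K aa : ℝ} (hσ : 0 < σ) (hK : 0 < K) (haa : 0 < aa) (x : ℝ) :
    max (aa * Real.exp (σ * x) - K) 0
      = (Ici (Real.log (K / aa) / σ)).indicator (fun x => aa * Real.exp (σ * x) - K) x := by
  set c := Real.log (K / aa) / σ with hc
  have hKa : 0 < K / aa := div_pos hK haa
  have hec : Real.exp (σ * c) = K / aa := by
    rw [hc, mul_div_cancel₀ _ hσ.ne', Real.exp_log hKa]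
  by_cases hx : x ∈ Ici c
  · rw [indicator_of_mem hx]
    have h1 : K / aa ≤ Real.exp (σ * x) := by
      rw [← hec]; exact Real.exp_le_exp.mpr (mul_le_mul_of_nonneg_left hx hσ.le)
    have h2 : K ≤ Real.exp (σ * x) * aa := (div_le_iff₀ haa).mp h1
    exact max_eq_left (by linarith [mul_comm aa (Real.exp (σ * x))])
  · rw [indicator_of_notMem hx]
    simp only [mem_Ici, not_le] at hx
    have h1 : Real.exp (σ * x) < K / aa := by
      rw [← hec]; exact Real.exp_lt_exp.mpr (mul_lt_mul_of_pos_left hx hσ)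
    have h2 : Real.exp (σ * x) * aa < K := (lt_div_iff₀ haa).mp h1
    exact max_eq_right (by linarith [mul_comm aa (Real.exp (σ * x))])

lemma call_integrable (hv : v ≠ 0) {σ K aa : ℝ} (hσ : 0 < σ) (hK : 0 < K) (haa : 0 < aa) :
    Integrable (fun x => max (aa * Real.exp (σ * x) - K) 0) (gaussianReal μ v) := by
  refine ((integrable_exp_gaussian hv σ).const_mul aa).mono ?_ (ae_of_all _ fun x => ?_)
  · exact ((((measurable_const_mul σ).exp.const_mul aa).sub measurable_const).max
      measurable_const).aestronglyMeasurable
  · have h1 : (0:ℝ) ≤ max (aa * Real.exp (σ * x) - K) 0 := le_max_right _ _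
    have h2 : max (aa * Real.exp (σ * x) - K) 0 ≤ aa * Real.exp (σ * x) :=
      max_le (by nlinarith [Real.exp_pos (σ * x)]) (by positivity)
    rw [Real.norm_eq_abs, Real.norm_eq_abs, abs_of_nonneg h1, abs_of_nonneg (by positivity)]
    exact h2

lemma call_integral (hv : v ≠ 0) {σ K aa : ℝ} (hσ : 0 < σ) (hK : 0 < K) (haa : 0 < aa) (μ : ℝ) :
    ∫ x, max (aa * Real.exp (σ * x) - K) 0 ∂(gaussianReal μ v) =
      aa * Real.exp (σ * μ + σ ^ 2 * v / 2) *
          stdNormalCDF ((Real.log (aa / K) + σ * μ) / (σ * Real.sqrt v) + σ * Real.sqrt v)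
        - K * stdNormalCDF ((Real.log (aa / K) + σ * μ) / (σ * Real.sqrt v)) := by
  have hs := sqrt_v_pos hv
  have hvv : Real.sqrt v * Real.sqrt v = (v : ℝ) := Real.mul_self_sqrt v.coe_nonneg
  set c := Real.log (K / aa) / σ with hc
  have hlog : Real.log (K / aa) = - Real.log (aa / K) := by
    rw [Real.log_div hK.ne' haa.ne', Real.log_div haa.ne' hK.ne']; ring
  rw [show (fun x => max (aa * Real.exp (σ * x) - K) 0)
      = (Ici c).indicator (fun x => aa * Real.exp (σ * x) - K) from
    funext (call_indicator hσ hK haa), integral_indicator measurableSet_Ici]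
  rw [integral_sub (((integrable_exp_gaussian hv σ).const_mul aa).integrableOn)
    (integrable_const K).integrableOn]
  rw [integral_const_mul, setIntegral_exp_gaussian hv σ c, setIntegral_const, smul_eq_mul,
    gaussianReal_Ici_toReal hv, measureReal_def, gaussianReal_Ici_toReal hv]
  have e2 : (μ - c) / Real.sqrt v = (Real.log (aa / K) + σ * μ) / (σ * Real.sqrt v) := by
    rw [hc, hlog]
    field_simp
    ring
  have e1 : (μ + σ * v - c) / Real.sqrt v
      = (Real.log (aa / K) + σ * μ) / (σ * Real.sqrt v) + σ * Real.sqrt v := by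
    rw [← e2, div_add' _ _ _ hs.ne', mul_assoc, hvv]
    ring_nf
  rw [e1, e2]
  ring

lemma gaussianReal_Ioi_pos (hv : v ≠ 0) (μ c : ℝ) : 0 < gaussianReal μ v (Ioi c) := by
  rw [pos_iff_ne_zero, gaussianReal_apply _ hv]
  intro h
  rw [lintegral_eq_zero_iff (measurable_gaussianPDF μ v)] at h
  have h0 : ∀ᵐ x ∂(volume.restrict (Ioi c)), False := by
    filter_upwards [h] with x hx
    exact absurd hx (gaussianPDF_pos μ hv x).ne'
  have := ae_iff.mp h0
  simp only [not_false_iff, setOf_true, Measure.restrict_apply_univ] at this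
  rw [Real.volume_Ioi] at this
  exact ENNReal.top_ne_zero this

lemma call_integral_pos (hv : v ≠ 0) {σ K aa : ℝ} (hσ : 0 < σ) (hK : 0 < K) (haa : 0 < aa)
    (μ : ℝ) : 0 < ∫ x, max (aa * Real.exp (σ * x) - K) 0 ∂(gaussianReal μ v) := by
  refine (integral_pos_iff_support_of_nonneg_ae (ae_of_all _ fun x => le_max_right _ _)
    (call_integrable hv hσ hK haa)).mpr ?_
  refine lt_of_lt_of_le (gaussianReal_Ioi_pos hv μ (Real.log (K / aa) / σ)) (measure_mono ?_)
  intro x hx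
  simp only [mem_Ioi] at hx
  have hKa : 0 < K / aa := div_pos hK haa
  have hec : Real.exp (σ * (Real.log (K / aa) / σ)) = K / aa := by
    rw [mul_div_cancel₀ _ hσ.ne', Real.exp_log hKa]
  have h1 : K / aa < Real.exp (σ * x) := by
    rw [← hec]; exact Real.exp_lt_exp.mpr (mul_lt_mul_of_pos_left hx hσ)
  have h2 : K < Real.exp (σ * x) * aa := (div_lt_iff₀ haa).mp h1
  simp only [Function.mem_support]
  have : 0 < aa * Real.exp (σ * x) - K := by linarith [mul_comm aa (Real.exp (σ * x))]
  simp [max_eq_left this.le]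
  linarith

end CMH

end CMHAux

/-- **Conditional-mean hedging of a European call option (Corollary 3.4).**
With `G = σ(Y)`, conditionally Gaussian log-returns, next asset price
`S_{i+1} = a(Y)·exp(σX)`, and one-step transaction-cost portfolio value
`Vk1 = Vk + π·(S_{i+1} − S_i) − k·S_i·|π − π_prev|`, the conditional-mean hedging
condition `E[Vk1 | G] = E[(S_{i+1} − K)⁺ | G]` holds a.s. iff, a.s.,
`π·(Ŝ − S_i) = Ŝ·Φ(d⁺) − K·Φ(d⁻) − Vk + k·S_i·|π − π_prev|`,
where `Ŝ = a(Y)·exp(σ·m(Y) + σ²v/2)`, `d⁻ = (ln(a(Y)/K) + σ·m(Y))/(σ√v)`,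
`d⁺ = d⁻ + σ√v`. -/
theorem conditional_mean_hedging_european_call
    {Ω : Type*} {m0 : MeasurableSpace Ω} {P : Measure Ω} [IsProbabilityMeasure P]
    {E : Type*} {mE : MeasurableSpace E} [StandardBorelSpace E] [Nonempty E]
    (Y : Ω → E) (hY : Measurable Y)
    (X : Ω → ℝ) (hX : Measurable X)
    (m : E → ℝ) (hm : Measurable m) (v : ℝ≥0) (hv : 0 < v)
    (hGauss : ∀ᵐ ω ∂P, condDistrib X Y P (Y ω) = gaussianReal (m (Y ω)) v)
    (σ K : ℝ) (hσ : 0 < σ) (hK : 0 < K) {k : ℝ} (hk : k ∈ Set.Ico (0 : ℝ) 1)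
    (Si Vk pi piPrev : Ω → ℝ)
    (hSi : Measurable[MeasurableSpace.comap Y mE] Si)
    (hVk : Measurable[MeasurableSpace.comap Y mE] Vk)
    (hpi : Measurable[MeasurableSpace.comap Y mE] pi)
    (hpiPrev : Measurable[MeasurableSpace.comap Y mE] piPrev)
    (hSiInt : Integrable Si P) (hVkInt : Integrable Vk P)
    (hpiInt : Integrable pi P) (hpiPrevInt : Integrable piPrev P)
    (hSiPos : ∀ᵐ ω ∂P, 0 < Si ω)
    (a : E → ℝ) (ha : Measurable a) (haPos : ∀ᵐ ω ∂P, 0 < a (Y ω))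
    (Si1 : Ω → ℝ) (hSi1 : ∀ ω, Si1 ω = a (Y ω) * Real.exp (σ * X ω))
    (hSi1Int : Integrable Si1 P)
    (hpiSi1Int : Integrable (fun ω => pi ω * Si1 ω) P)
    (hCallInt : Integrable (fun ω => max (Si1 ω - K) 0) P)
    (Vk1 : Ω → ℝ)
    (hVk1 : ∀ ω, Vk1 ω = Vk ω + pi ω * (Si1 ω - Si ω) - k * Si ω * |pi ω - piPrev ω|) :
    (P[Vk1|MeasurableSpace.comap Y mE]) =ᵐ[P]
        (P[fun ω => max (Si1 ω - K) 0|MeasurableSpace.comap Y mE]) ↔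
      ∀ᵐ ω ∂P,
        pi ω * (a (Y ω) * Real.exp (σ * m (Y ω) + σ ^ 2 * (v : ℝ) / 2) - Si ω) =
          a (Y ω) * Real.exp (σ * m (Y ω) + σ ^ 2 * (v : ℝ) / 2) *
              stdNormalCDF ((Real.log (a (Y ω) / K) + σ * m (Y ω)) / (σ * Real.sqrt v)
                + σ * Real.sqrt v)
            - K * stdNormalCDF ((Real.log (a (Y ω) / K) + σ * m (Y ω)) / (σ * Real.sqrt v))
            - Vk ω + k * Si ω * |pi ω - piPrev ω| := by
  classical
  have hmG : MeasurableSpace.comap Y mE ≤ m0 := hY.comap_le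
  have hv' : v ≠ 0 := hv.ne'
  -- measurability of auxiliary functions of the pair (Y, X)
  have hmax : Measurable fun p : E × ℝ => max (a p.1 * Real.exp (σ * p.2) - K) 0 :=
    (((ha.comp measurable_fst).mul
      ((measurable_const_mul σ).comp measurable_snd).exp).sub measurable_const).max
      measurable_const
  have hexp : Measurable fun p : E × ℝ => a p.1 * Real.exp (σ * p.2) :=
    (ha.comp measurable_fst).mul ((measurable_const_mul σ).comp measurable_snd).exp
  -- conditional expectation of the call payoff
  have hrwC : (fun ω => max (Si1 ω - K) 0)
      = fun ω => (fun p : E × ℝ => max (a p.1 * Real.exp (σ * p.2) - K) 0) (Y ω, X ω) := by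
    funext ω; simp only [hSi1 ω]
  have h_call : P[(fun ω => max (Si1 ω - K) 0)|MeasurableSpace.comap Y mE] =ᵐ[P]
      fun ω => ∫ x, max (a (Y ω) * Real.exp (σ * x) - K) 0 ∂(condDistrib X Y P (Y ω)) := by
    rw [hrwC]
    exact condExp_prod_ae_eq_integral_condDistrib hY hX.aemeasurable hmax.stronglyMeasurable
      (by rw [← hrwC]; exact hCallInt)
  have h_call' : P[(fun ω => max (Si1 ω - K) 0)|MeasurableSpace.comap Y mE] =ᵐ[P]
      fun ω =>
        a (Y ω) * Real.exp (σ * m (Y ω) + σ ^ 2 * (v : ℝ) / 2) *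
            stdNormalCDF ((Real.log (a (Y ω) / K) + σ * m (Y ω)) / (σ * Real.sqrt v)
              + σ * Real.sqrt v)
          - K * stdNormalCDF ((Real.log (a (Y ω) / K) + σ * m (Y ω)) / (σ * Real.sqrt v)) := by
    refine h_call.trans ?_
    filter_upwards [hGauss, haPos] with ω h1 h2
    rw [h1, CMH.call_integral hv' hσ hK h2 (m (Y ω))]
  -- conditional expectation of the next asset price
  have hrwS : Si1 = fun ω => (fun p : E × ℝ => a p.1 * Real.exp (σ * p.2)) (Y ω, X ω) := by
    funext ω; simp only [hSi1 ω]
  have h_S : P[Si1|MeasurableSpace.comap Y mE] =ᵐ[P]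
      fun ω => ∫ x, a (Y ω) * Real.exp (σ * x) ∂(condDistrib X Y P (Y ω)) := by
    rw [hrwS]
    exact condExp_prod_ae_eq_integral_condDistrib hY hX.aemeasurable hexp.stronglyMeasurable
      (by rw [← hrwS]; exact hSi1Int)
  have h_S' : P[Si1|MeasurableSpace.comap Y mE] =ᵐ[P]
      fun ω => a (Y ω) * Real.exp (σ * m (Y ω) + σ ^ 2 * (v : ℝ) / 2) := by
    refine h_S.trans ?_
    filter_upwards [hGauss] with ω h1
    rw [h1, integral_const_mul, CMH.integral_exp_gaussian hv' σ]
  -- pull-out property for pi * Si1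
  have hpiSi1Int' : Integrable (pi * Si1) P := hpiSi1Int
  have h_piS : P[pi * Si1|MeasurableSpace.comap Y mE] =ᵐ[P]
      fun ω => pi ω * (a (Y ω) * Real.exp (σ * m (Y ω) + σ ^ 2 * (v : ℝ) / 2)) := by
    refine (condExp_mul_of_stronglyMeasurable_left hpi.stronglyMeasurable hpiSi1Int' hSi1Int).trans ?_
    filter_upwards [h_S'] with ω hω
    simp only [Pi.mul_apply, hω]
  have h_piShat_int : Integrable
      (fun ω => pi ω * (a (Y ω) * Real.exp (σ * m (Y ω) + σ ^ 2 * (v : ℝ) / 2))) P :=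
    integrable_condExp.congr h_piS
  have h_C_int : Integrable (fun ω =>
        a (Y ω) * Real.exp (σ * m (Y ω) + σ ^ 2 * (v : ℝ) / 2) *
            stdNormalCDF ((Real.log (a (Y ω) / K) + σ * m (Y ω)) / (σ * Real.sqrt v)
              + σ * Real.sqrt v)
          - K * stdNormalCDF ((Real.log (a (Y ω) / K) + σ * m (Y ω)) / (σ * Real.sqrt v))) P :=
    integrable_condExp.congr h_call'
  -- the transaction-cost term
  set W : Ω → ℝ := fun ω => pi ω * Si ω + k * Si ω * |pi ω - piPrev ω| with hWdef
  have hWSM : StronglyMeasurable[MeasurableSpace.comap Y mE] W :=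
    ((hpi.mul hSi).add ((hSi.const_mul k).mul
      (measurable_abs.comp (hpi.sub hpiPrev)))).stronglyMeasurable
  have hVk1eq : Vk1 = Vk + pi * Si1 - W := by
    funext ω
    simp only [Pi.sub_apply, Pi.add_apply, Pi.mul_apply, hVk1 ω, hWdef]
    ring
  by_cases hWint : Integrable W P
  · -- integrable case: compute both conditional expectations
    have h_left : P[Vk1|MeasurableSpace.comap Y mE] =ᵐ[P]
        fun ω => Vk ω + pi ω * (a (Y ω) * Real.exp (σ * m (Y ω) + σ ^ 2 * (v : ℝ) / 2))
          - W ω := by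
      rw [hVk1eq]
      have hsub := condExp_sub (μ := P) (m := MeasurableSpace.comap Y mE)
        (hVkInt.add hpiSi1Int') hWint
      have hadd := condExp_add (μ := P) (m := MeasurableSpace.comap Y mE) hVkInt hpiSi1Int'
      rw [condExp_of_stronglyMeasurable hmG hWSM hWint] at hsub
      have hVkSM : StronglyMeasurable[MeasurableSpace.comap Y mE] Vk := hVk.stronglyMeasurable
      rw [condExp_of_stronglyMeasurable hmG hVkSM hVkInt] at hadd
      refine hsub.trans ?_
      filter_upwards [hadd, h_piS] with ω h1 h2
      simp only [Pi.sub_apply, Pi.add_apply] at h1 ⊢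
      rw [h1, h2]
    constructor
    · intro h
      have hfin := (h_left.symm.trans h).trans h_call'
      filter_upwards [hfin] with ω hω
      simp only [hWdef] at hω
      linear_combination hω
    · intro h
      refine h_left.trans (Filter.EventuallyEq.trans ?_ h_call'.symm)
      filter_upwards [h] with ω hω
      simp only [hWdef]
      linear_combination hω
  · -- non-integrable case: both sides fail
    have hVk1not : ¬ Integrable Vk1 P := fun hint => hWint
      (((hVkInt.add hpiSi1Int').sub hint).congr (ae_of_all _ fun ω => by
        simp only [Pi.sub_apply, Pi.add_apply, Pi.mul_apply, hVk1 ω, hWdef]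
        ring))
    haveI : (MeasureTheory.ae P).NeBot :=
      ae_neBot.mpr (IsProbabilityMeasure.ne_zero P)
    constructor
    · intro h
      exfalso
      rw [condExp_of_not_integrable hVk1not] at h
      have h0 := h.trans h_call'
      have hpos : ∀ᵐ ω ∂P, 0 <
          a (Y ω) * Real.exp (σ * m (Y ω) + σ ^ 2 * (v : ℝ) / 2) *
              stdNormalCDF ((Real.log (a (Y ω) / K) + σ * m (Y ω)) / (σ * Real.sqrt v)
                + σ * Real.sqrt v)
            - K * stdNormalCDF ((Real.log (a (Y ω) / K) + σ * m (Y ω)) / (σ * Real.sqrt v)) := by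
        filter_upwards [haPos] with ω h2
        have hlt := CMH.call_integral_pos hv' hσ hK h2 (m (Y ω))
        rwa [CMH.call_integral hv' hσ hK h2 (m (Y ω))] at hlt
      obtain ⟨ω, hω0, hωp⟩ := (h0.and hpos).exists
      simp only [Pi.zero_apply] at hω0
      rw [← hω0] at hωp
      exact lt_irrefl 0 hωp
    · intro h
      exfalso
      apply hWint
      refine ((h_piShat_int.sub h_C_int).add hVkInt).congr ?_
      filter_upwards [h] with ω hω
      simp only [hWdef, Pi.add_apply, Pi.sub_apply]
      linear_combination hω
end

section
/- Let a, c, p, C be real numbers with c ≥ 0 and |a| > c. Then there exists a unique x ∈ ℝ such that a·x − c·|x − p| = C. Equivalently, the map h : ℝ → ℝ given by h(x) = a·x − c·|x − p| is a bijection from ℝ to ℝ. -/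
/-- **Well-posedness of the implicit one-step hedging equation.**
If `c ≥ 0` and `|a| > c`, then for every target `C` there is a unique `x` with
`a·x − c·|x − p| = C`; equivalently, `x ↦ a·x − c·|x − p|` is a bijection of `ℝ`. -/
theorem exists_unique_hedging_position
    (a c p C : ℝ) (hc : 0 ≤ c) (hac : c < |a|) :
    (∃! x : ℝ, a * x - c * |x - p| = C) ∧
      Function.Bijective (fun x : ℝ => a * x - c * |x - p|) := by
  have ha : a ≠ 0 := by
    intro h; rw [h, abs_zero] at hac; linarith
  have hinj : Function.Injective (fun x : ℝ => a * x - c * |x - p|) := by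
    intro x y hxy
    simp only at hxy
    have h1 : a * (x - y) = c * (|x - p| - |y - p|) := by linarith
    have h2 : |a| * |x - y| ≤ c * |x - y| := by
      calc |a| * |x - y| = |a * (x - y)| := (abs_mul a _).symm
        _ = |c * (|x - p| - |y - p|)| := by rw [h1]
        _ = c * |(|x - p| - |y - p|)| := by rw [abs_mul, abs_of_nonneg hc]
        _ ≤ c * |x - y| := by
            have h3 := abs_abs_sub_abs_le_abs_sub (x - p) (y - p)
            have h4 : x - p - (y - p) = x - y := by ring
            rw [h4] at h3
            exact mul_le_mul_of_nonneg_left h3 hc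
    by_contra hne
    have hpos : 0 < |x - y| := abs_pos.mpr (sub_ne_zero.mpr hne)
    nlinarith
  have hsurj : Function.Surjective (fun x : ℝ => a * x - c * |x - p|) := by
    intro D
    rcases lt_or_gt_of_ne ha with hneg | hpos
    · have hA : c < -a := by rwa [abs_of_neg hneg] at hac
      have h1 : a + c < 0 := by linarith
      have h2 : a - c < 0 := by linarith
      rcases le_or_gt D (a * p) with hD | hD
      · refine ⟨p + (D - a * p) / (a - c), ?_⟩
        have hx : 0 ≤ (D - a * p) / (a - c) :=
          div_nonneg_iff.mpr (Or.inr ⟨by linarith, h2.le⟩)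
        have key : (a - c) * ((D - a * p) / (a - c)) = D - a * p :=
          mul_div_cancel₀ _ h2.ne
        simp only
        rw [show p + (D - a * p) / (a - c) - p = (D - a * p) / (a - c) by ring,
          abs_of_nonneg hx]
        linear_combination key
      · refine ⟨p + (D - a * p) / (a + c), ?_⟩
        have hx : (D - a * p) / (a + c) ≤ 0 :=
          div_nonpos_of_nonneg_of_nonpos (by linarith) h1.le
        have key : (a + c) * ((D - a * p) / (a + c)) = D - a * p :=
          mul_div_cancel₀ _ h1.ne
        simp only
        rw [show p + (D - a * p) / (a + c) - p = (D - a * p) / (a + c) by ring,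
          abs_of_nonpos hx]
        linear_combination key
    · have hA : c < a := by rwa [abs_of_pos hpos] at hac
      have h1 : 0 < a + c := by linarith
      have h2 : 0 < a - c := by linarith
      rcases le_or_gt (a * p) D with hD | hD
      · refine ⟨p + (D - a * p) / (a - c), ?_⟩
        have hx : 0 ≤ (D - a * p) / (a - c) := div_nonneg (by linarith) h2.le
        have key : (a - c) * ((D - a * p) / (a - c)) = D - a * p :=
          mul_div_cancel₀ _ h2.ne'
        simp only
        rw [show p + (D - a * p) / (a - c) - p = (D - a * p) / (a - c) by ring,
          abs_of_nonneg hx]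
        linear_combination key
      · refine ⟨p + (D - a * p) / (a + c), ?_⟩
        have hx : (D - a * p) / (a + c) ≤ 0 :=
          div_nonpos_of_nonpos_of_nonneg (by linarith) h1.le
        have key : (a + c) * ((D - a * p) / (a + c)) = D - a * p :=
          mul_div_cancel₀ _ h1.ne'
        simp only
        rw [show p + (D - a * p) / (a + c) - p = (D - a * p) / (a + c) by ring,
          abs_of_nonpos hx]
        linear_combination key
  refine ⟨?_, hinj, hsurj⟩
  obtain ⟨x, hx⟩ := hsurj C
  exact ⟨x, hx, fun y hy => hinj (by simp only [hx, hy])⟩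
end
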